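/- Two orientations G⃗₁ and G⃗₂ of a graph G are push equivalent if and only if every ordered cycle of G has the same directability type in G⃗₁ and G⃗₂ (i.e., in each ordered cycle, the parity of the number of forward arcs is the same in both orientations). -/

import Mathlib

open SimpleGraph

namespace Stmt9Aux

variable {V : Type*} {G : SimpleGraph V}

def walkSum (F : V → V → ZMod 2) {a b : V} (w : G.Walk a b) : ZMod 2 :=
  (w.darts.map fun d => F d.toProd.1 d.toProd.2).sum

@[simp] lemma walkSum_nil (F : V → V → ZMod 2) {a : V} :
    walkSum F (Walk.nil : G.Walk a a) = 0 := rfl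

@[simp] lemma walkSum_cons (F : V → V → ZMod 2) {a b c : V} (h : G.Adj a b)
    (p : G.Walk b c) : walkSum F (Walk.cons h p) = F a b + walkSum F p := by
  simp [walkSum]

@[simp] lemma walkSum_append (F : V → V → ZMod 2) {a b c : V} (p : G.Walk a b)
    (q : G.Walk b c) : walkSum F (p.append q) = walkSum F p + walkSum F q := by
  simp [walkSum, Walk.darts_append]

lemma walkSum_reverse (F : V → V → ZMod 2) (hs : ∀ u v, G.Adj u v → F u v = F v u)
    {a b : V} (w : G.Walk a b) : walkSum F w.reverse = walkSum F w := by
  rw [walkSum, Walk.darts_reverse, List.map_reverse, List.sum_reverse, List.map_map]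
  congr 1
  apply List.map_congr_left
  intro d _
  simp only [Function.comp_apply, Dart.symm_toProd, Prod.fst_swap, Prod.snd_swap]
  exact (hs _ _ d.adj).symm

lemma edge_mem_length_one : ∀ {y x : V} (q : G.Walk y x), q.IsPath → s(x, y) ∈ q.edges →
    q.length = 1 := by
  intro y x q hq he
  induction q with
  | nil => simp at he
  | @cons u v w h p ih =>
    rw [Walk.edges_cons, List.mem_cons] at he
    rcases he with he | he
    · rw [Sym2.eq_iff] at he
      rcases he with ⟨h1, h2⟩ | ⟨h1, h2⟩
      · exact absurd h2 h.ne
      · subst h1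
        have : p = Walk.nil := Walk.isPath_iff_eq_nil.mp (Walk.IsPath.of_cons hq)
        simp [this]
    · exfalso
      have := Walk.snd_mem_support_of_mem_edges p he
      rw [Walk.cons_isPath_iff] at hq
      exact hq.2 this


lemma walkSum_closed (F : V → V → ZMod 2) (hs : ∀ u v, G.Adj u v → F u v = F v u)
    (hcyc : ∀ (x : V) (w : G.Walk x x), w.IsCycle → walkSum F w = 0) :
    ∀ (n : ℕ) (x : V) (w : G.Walk x x), w.length = n → walkSum F w = 0 := by
  classical
  intro n
  induction n using Nat.strong_induction_on with
  | _ n IH =>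
  intro x w hw
  cases w with
  | nil => simp
  | @cons _ y _ h q =>
    by_cases hnd : q.support.Nodup
    · by_cases he : s(x, y) ∈ q.edges
      · have hl : q.length = 1 :=
          edge_mem_length_one q ((Walk.isPath_def q).mpr hnd) he
        cases q with
        | nil => simp at hl
        | @cons _ z _ h' q' =>
          cases q' with
          | nil =>
            have h2 : ∀ a : ZMod 2, a + a = 0 := by decide
            simp only [walkSum_cons, walkSum_nil, add_zero]
            rw [hs x y h]
            exact h2 _
          | cons h'' q'' => simp [Walk.length_cons] at hl
      · exact hcyc x (Walk.cons h q)
          ((Walk.cons_isCycle_iff q h).mpr ⟨(Walk.isPath_def q).mpr hnd, he⟩)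
    · obtain ⟨z, hdup⟩ := List.exists_duplicate_iff_not_nodup.mpr hnd
      have hcount : 2 ≤ q.support.count z := List.duplicate_iff_two_le_count.mp hdup
      have hz : z ∈ q.support := hdup.mem
      set A := q.takeUntil z hz with hA
      set r := q.dropUntil z hz with hrdef
      have hspec : A.append r = q := q.take_spec hz
      have hone : A.support.count z = 1 := q.count_support_takeUntil_eq_one hz
      have hzr : z ∈ r.support.tail := by
        have hsup : q.support = A.support ++ r.support.tail := by
          rw [← hspec, Walk.support_append]
        rw [hsup, List.count_append, hone] at hcount
        have h1 : 0 < r.support.tail.count z := by omega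
        exact List.count_pos_iff.mp h1
      have hrnn : ¬ r.Nil := by
        intro hnil
        rw [Walk.nil_iff_length_eq] at hnil
        have hlsup := r.length_support
        rw [hnil] at hlsup
        have : r.support.tail = [] := by
          have : r.support.tail.length = r.support.length - 1 := List.length_tail
          rw [hlsup] at this
          exact List.eq_nil_of_length_eq_zero (by omega)
        rw [this] at hzr
        simp at hzr
      obtain ⟨z₂, h₂, r₂, hr₂⟩ := Walk.not_nil_iff.mp hrnn
      have hzr₂ : z ∈ r₂.support := by
        rw [hr₂] at hzr; simpa using hzr
      set B := r₂.takeUntil z hzr₂ with hB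
      set C := r₂.dropUntil z hzr₂ with hC
      have hspec₂ : B.append C = r₂ := r₂.take_spec hzr₂
      have hlen : q.length = A.length + (1 + (B.length + C.length)) := by
        conv_lhs => rw [← hspec]
        rw [Walk.length_append, hr₂, Walk.length_cons, ← hspec₂, Walk.length_append]
        omega
      have hwlen : q.length + 1 = n := by simpa using hw
      have e₁ : walkSum F (Walk.cons h₂ B) = 0 :=
        IH (Walk.cons h₂ B).length (by rw [Walk.length_cons]; omega) z _ rfl
      have e₂ : walkSum F (Walk.cons h (A.append C)) = 0 :=
        IH (Walk.cons h (A.append C)).length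
          (by rw [Walk.length_cons, Walk.length_append]; omega) x _ rfl
      have hsplit : walkSum F (Walk.cons h q) =
          walkSum F (Walk.cons h₂ B) + walkSum F (Walk.cons h (A.append C)) := by
        conv_lhs => rw [← hspec, hr₂, ← hspec₂]
        simp only [walkSum_cons, walkSum_append]
        ring
      rw [hsplit, e₁, e₂, add_zero]

lemma length_filter_cast {α : Type*} (l : List α) (p : α → Bool) :
    ((l.filter p).length : ZMod 2) = (l.map fun x => if p x then (1 : ZMod 2) else 0).sum := by
  induction l with
  | nil => simp
  | cons a l ih =>
    by_cases hpa : p a <;> simp [List.filter_cons, hpa, ih] <;> push_cast <;> ring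

lemma sum_map_add {α : Type*} (l : List α) (f g : α → ZMod 2) :
    (l.map fun x => f x + g x).sum = (l.map f).sum + (l.map g).sum := by
  induction l with
  | nil => simp
  | cons a l ih => simp [ih]; ring

lemma walkSum_tele (F : V → V → ZMod 2) (σ : V → ZMod 2)
    (hF : ∀ u v, G.Adj u v → F u v = σ u + σ v) :
    ∀ {a b : V} (w : G.Walk a b), walkSum F w = σ a + σ b := by
  have h2 : ∀ z : ZMod 2, z + z = 0 := by decide
  intro a b w
  induction w with
  | nil => rw [walkSum_nil]; exact (h2 _).symm
  | @cons u c w h p ih =>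
    rw [walkSum_cons, hF _ _ h, ih]
    linear_combination h2 (σ c)

end Stmt9Aux

/-- Two orientations of a graph `G` (encoded by `o : V → V → Bool`, where on adjacent
pairs `o u v = true` means the arc is directed `u → v`) are push equivalent iff every
ordered cycle of `G` has the same directability type in both, i.e. the number of
forward arcs along the cycle has the same parity in both orientations. -/
theorem stmt9 {V : Type*} (G : SimpleGraph V) (o₁ o₂ : V → V → Bool)
    (h₁ : ∀ u v, G.Adj u v → o₁ u v = !o₁ v u)
    (h₂ : ∀ u v, G.Adj u v → o₂ u v = !o₂ v u) :
    (∃ s : V → Bool, ∀ u v, G.Adj u v →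
        Bool.xor (o₁ u v) (Bool.xor (s u) (s v)) = o₂ u v)
    ↔ ∀ (v : V) (w : G.Walk v v), w.IsCycle →
        (w.darts.filter fun d => o₁ d.toProd.1 d.toProd.2).length
          ≡ (w.darts.filter fun d => o₂ d.toProd.1 d.toProd.2).length [MOD 2] := by
  classical
  open Stmt9Aux in
  set F : V → V → ZMod 2 :=
    fun u v => (if o₁ u v then 1 else 0) + (if o₂ u v then 1 else 0) with hFdef
  have heq0 : ∀ a b : ZMod 2, a = b ↔ a + b = 0 := by decide
  have key : ∀ {a b : V} (w : G.Walk a b),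
      ((w.darts.filter fun d => o₁ d.toProd.1 d.toProd.2).length : ZMod 2)
        + ((w.darts.filter fun d => o₂ d.toProd.1 d.toProd.2).length : ZMod 2)
        = walkSum F w := by
    intro a b w
    rw [length_filter_cast, length_filter_cast, walkSum, hFdef, ← sum_map_add]
  have modiff : ∀ {a b : V} (w : G.Walk a b),
      ((w.darts.filter fun d => o₁ d.toProd.1 d.toProd.2).length
        ≡ (w.darts.filter fun d => o₂ d.toProd.1 d.toProd.2).length [MOD 2])
      ↔ walkSum F w = 0 := by
    intro a b w
    rw [← ZMod.natCast_eq_natCast_iff, heq0, key]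
  constructor
  · rintro ⟨s, hs⟩ v w hc
    rw [modiff]
    set σ : V → ZMod 2 := fun x => if s x then 1 else 0 with hσdef
    have hFσ : ∀ u v, G.Adj u v → F u v = σ u + σ v := by
      intro u v huv
      have hx := hs u v huv
      rw [hFdef, hσdef]
      cases hb1 : o₁ u v <;> cases hbu : s u <;> cases hbv : s v <;>
        rw [hb1, hbu, hbv] at hx <;> simp [hb1, hbu, hbv, ← hx] <;> decide
    rw [walkSum_tele F σ hFσ w]
    exact (heq0 _ _).mp rfl
  · intro hmod
    have hcyc : ∀ (x : V) (w : G.Walk x x), w.IsCycle → walkSum F w = 0 := by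
      intro x w hc
      rw [← modiff]
      exact hmod x w hc
    have hsymF : ∀ u v, G.Adj u v → F u v = F v u := by
      intro u v huv
      rw [hFdef]
      simp only
      rw [h₁ u v huv, h₂ u v huv]
      cases o₁ v u <;> cases o₂ v u <;> simp <;> decide
    set root : V → V := fun v => (G.connectedComponentMk v).out with hrootdef
    have hreach : ∀ v, G.Reachable (root v) v := by
      intro v
      exact ConnectedComponent.exact (Quot.out_eq _)
    have wk : ∀ v, G.Walk (root v) v := fun v => Classical.choice (hreach v)
    set σ : V → ZMod 2 := fun v => walkSum F (wk v) with hσdef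
    have hrw : ∀ {a b u : V} (e : a = b) (p : G.Walk a u),
        walkSum F (e ▸ p) = walkSum F p := by
      rintro a b u rfl p; rfl
    have hkey : ∀ u v, G.Adj u v → σ u + σ v = F u v := by
      intro u v huv
      have hroot : root u = root v := by
        rw [hrootdef]
        simp only
        rw [ConnectedComponent.sound huv.reachable]
      have hc : walkSum F ((hroot ▸ wk u).append (Walk.cons huv (wk v).reverse)) = 0 :=
        walkSum_closed F hsymF hcyc _ _ _ rfl
      rw [walkSum_append, hrw, walkSum_cons, walkSum_reverse F hsymF] at hc
      have hsolve : ∀ a b c : ZMod 2, a + (b + c) = 0 → a + c = b := by decide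
      exact hsolve _ _ _ hc
    refine ⟨fun x => decide (σ x = 1), ?_⟩
    intro u v huv
    have hσ := hkey u v huv
    rw [hFdef] at hσ
    simp only at hσ
    have h01 : ∀ z : ZMod 2, z = 0 ∨ z = 1 := by decide
    show (o₁ u v ^^ (decide (σ u = 1) ^^ decide (σ v = 1))) = o₂ u v
    rcases h01 (σ u) with hu | hu <;> rcases h01 (σ v) with hv | hv <;>
      cases hb1 : o₁ u v <;> cases hb2 : o₂ u v <;>
      rw [hu, hv, hb1, hb2] at hσ <;> rw [hu, hv] <;>
      first
        | decide
        | (revert hσ; decide)
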